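/- Let G be a finite group, let ρ : G → Matrix (Fin N) (Fin N) ℂ be a representation of G by complex matrices (a monoid homomorphism into the multiplicative monoid of matrices, so ρ(1) = 1 and ρ(gh) = ρ(g)·ρ(h)), let q : G → ℝ satisfy q(g) ≥ 0 for all g and ∑_{g∈G} q(g) = 1, and let t ≥ 0. Then there exists w : G → ℝ with w(g) ≥ 0 for all g, ∑_{g∈G} w(g) = 1, and Matrix.exp(t • (∑_{g∈G} q(g) • ρ(g) − 1)) = ∑_{g∈G} w(g) • ρ(g). In words: the dynamical semigroup generated by a convex combination of Lindblad generators ρ(g) − 1 is at every time a convex combination of the group members. -/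

import Mathlib

open NormedSpace

lemma real_exp_summable (x : ℝ) : Summable (fun n : ℕ => ((n.factorial : ℝ))⁻¹ * x ^ n) := by
  simpa [inv_mul_eq_div] using Real.summable_pow_div_factorial x

lemma real_exp_tsum (x : ℝ) : ∑' n : ℕ, ((n.factorial : ℝ))⁻¹ * x ^ n = Real.exp x := by
  rw [Real.exp_eq_exp_ℝ, NormedSpace.exp_eq_tsum ℝ]
  simp [smul_eq_mul]

lemma term_eq {N : ℕ} (x : ℝ) (M : Matrix (Fin N) (Fin N) ℂ) (n : ℕ) :
    ((n.factorial : ℂ))⁻¹ • (x • M) ^ n = ((n.factorial : ℝ)⁻¹ * x ^ n) • M ^ n := by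
  have h : ((n.factorial : ℂ))⁻¹ = ((((n.factorial : ℝ))⁻¹ : ℝ) : ℂ) := by push_cast; ring
  rw [smul_pow, h, Complex.coe_smul, smul_smul]

lemma exp_smul_eq_tsum {N : ℕ} (x : ℝ) (M : Matrix (Fin N) (Fin N) ℂ) :
    NormedSpace.exp (x • M) = ∑' n : ℕ, ((n.factorial : ℝ)⁻¹ * x ^ n) • M ^ n := by
  letI : SeminormedRing (Matrix (Fin N) (Fin N) ℂ) := Matrix.linftyOpSemiNormedRing
  letI : NormedRing (Matrix (Fin N) (Fin N) ℂ) := Matrix.linftyOpNormedRing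
  letI : NormedAlgebra ℂ (Matrix (Fin N) (Fin N) ℂ) := Matrix.linftyOpNormedAlgebra
  rw [NormedSpace.exp_eq_tsum ℂ]
  exact tsum_congr fun n => term_eq x M n

lemma summable_term {N : ℕ} (x : ℝ) (M : Matrix (Fin N) (Fin N) ℂ) :
    Summable (fun n : ℕ => ((n.factorial : ℝ)⁻¹ * x ^ n) • M ^ n) := by
  letI : SeminormedRing (Matrix (Fin N) (Fin N) ℂ) := Matrix.linftyOpSemiNormedRing
  letI : NormedRing (Matrix (Fin N) (Fin N) ℂ) := Matrix.linftyOpNormedRing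
  letI : NormedAlgebra ℂ (Matrix (Fin N) (Fin N) ℂ) := Matrix.linftyOpNormedAlgebra
  have h := NormedSpace.expSeries_summable' (𝕂 := ℂ) (x • M)
  have e : (fun n : ℕ => ((n.factorial : ℂ))⁻¹ • (x • M) ^ n)
      = fun n => ((n.factorial : ℝ)⁻¹ * x ^ n) • M ^ n := funext fun n => term_eq x M n
  exact e ▸ h

lemma exp_real_smul_one {N : ℕ} (x : ℝ) :
    NormedSpace.exp (x • (1 : Matrix (Fin N) (Fin N) ℂ)) = Real.exp x • 1 := by
  rw [exp_smul_eq_tsum]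
  simp_rw [one_pow]
  rw [Summable.tsum_smul_const (real_exp_summable x), real_exp_tsum]

lemma aux_pow {G : Type*} [Group G] [Fintype G] {N : ℕ}
    (ρ : G →* Matrix (Fin N) (Fin N) ℂ)
    (q : G → ℝ) (hq : ∀ g : G, 0 ≤ q g) (hqsum : ∑ g : G, q g = 1) (n : ℕ) :
    ∃ c : G → ℝ, (∀ g, 0 ≤ c g) ∧ (∑ g : G, c g = 1) ∧
      (∑ g : G, q g • ρ g) ^ n = ∑ g : G, c g • ρ g := by
  classical
  induction n with
  | zero =>
    refine ⟨fun g => if g = 1 then 1 else 0, fun g => by by_cases h : g = 1 <;> simp [h], by simp, ?_⟩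
    rw [pow_zero]
    rw [Finset.sum_eq_single (1 : G)]
    · simp
    · intro b _ hb; simp [hb]
    · simp
  | succ n ih =>
    obtain ⟨c, hc0, hc1, hcA⟩ := ih
    refine ⟨fun k => ∑ g : G, c g * q (g⁻¹ * k),
      fun k => Finset.sum_nonneg fun g _ => mul_nonneg (hc0 g) (hq _), ?_, ?_⟩
    · rw [Finset.sum_comm]
      have : ∀ g : G, ∑ k : G, c g * q (g⁻¹ * k) = c g := by
        intro g
        rw [← Finset.mul_sum]
        rw [show (∑ k : G, q (g⁻¹ * k)) = ∑ k : G, q k from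
          Equiv.sum_comp (Equiv.mulLeft g⁻¹) q]
        rw [hqsum, mul_one]
      simp_rw [this, hc1]
    · rw [pow_succ, hcA, Finset.sum_mul_sum]
      simp_rw [smul_mul_smul_comm, ← map_mul, Finset.sum_smul]
      conv_rhs => rw [Finset.sum_comm]
      refine Finset.sum_congr rfl fun g _ => ?_
      rw [show (∑ k : G, (c g * q (g⁻¹ * k)) • ρ k)
            = ∑ h : G, (c g * q (g⁻¹ * (g * h))) • ρ (g * h) from
        (Equiv.sum_comp (Equiv.mulLeft g) (fun k => (c g * q (g⁻¹ * k)) • ρ k)).symm]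
      simp [inv_mul_cancel_left]

/-- The dynamical semigroup generated by a convex combination of Lindblad
generators `ρ g − 1` is, at every time `t ≥ 0`, a convex combination of the group members. -/
theorem accessible_map_is_convex_combination_of_group
    {G : Type*} [Group G] [Fintype G] {N : ℕ}
    (ρ : G →* Matrix (Fin N) (Fin N) ℂ)
    (q : G → ℝ) (hq : ∀ g : G, 0 ≤ q g) (hqsum : ∑ g : G, q g = 1)
    (t : ℝ) (ht : 0 ≤ t) :
    ∃ w : G → ℝ, (∀ g : G, 0 ≤ w g) ∧ (∑ g : G, w g = 1) ∧
      NormedSpace.exp (t • ((∑ g : G, q g • ρ g) - 1)) = ∑ g : G, w g • ρ g := by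
  classical
  set A : Matrix (Fin N) (Fin N) ℂ := ∑ g : G, q g • ρ g with hA
  choose c hc0 hc1 hcA using aux_pow ρ q hq hqsum
  set a : ℕ → ℝ := fun n => Real.exp (-t) * ((n.factorial : ℝ)⁻¹ * t ^ n) with ha
  have ha0 : ∀ n, 0 ≤ a n := fun n =>
    mul_nonneg (Real.exp_nonneg _) (mul_nonneg (by positivity) (pow_nonneg ht n))
  have ha_summ : Summable a := (real_exp_summable t).mul_left _
  have ha_sum : ∑' n, a n = 1 := by
    rw [tsum_mul_left, real_exp_tsum, ← Real.exp_add, neg_add_cancel, Real.exp_zero]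
  have hcle : ∀ n g, c n g ≤ 1 := by
    intro n g
    calc c n g ≤ ∑ g' : G, c n g' :=
          Finset.single_le_sum (fun h _ => hc0 n h) (Finset.mem_univ g)
      _ = 1 := hc1 n
  have hw_summ : ∀ g : G, Summable fun n => a n * c n g := by
    intro g
    refine Summable.of_nonneg_of_le (fun n => mul_nonneg (ha0 n) (hc0 n g))
      (fun n => ?_) ha_summ
    calc a n * c n g ≤ a n * 1 := mul_le_mul_of_nonneg_left (hcle n g) (ha0 n)
      _ = a n := mul_one _
  refine ⟨fun g => ∑' n, a n * c n g,
    fun g => tsum_nonneg fun n => mul_nonneg (ha0 n) (hc0 n g), ?_, ?_⟩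
  · rw [← Summable.tsum_finsetSum (fun g _ => hw_summ g)]
    have : ∀ n : ℕ, ∑ g : G, a n * c n g = a n := by
      intro n
      rw [← Finset.mul_sum, hc1, mul_one]
    rw [tsum_congr this, ha_sum]
  · have hsplit : t • (A - 1) = (-t) • (1 : Matrix (Fin N) (Fin N) ℂ) + t • A := by
      rw [smul_sub, neg_smul]
      abel
    rw [hsplit, Matrix.exp_add_of_commute _ _
        (((Commute.one_left A).smul_left (-t)).smul_right t),
      exp_real_smul_one, exp_smul_eq_tsum, smul_mul_assoc, one_mul,
      ← Summable.tsum_const_smul (Real.exp (-t)) (summable_term t A)]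
    have key : ∀ n : ℕ, Real.exp (-t) • (((n.factorial : ℝ)⁻¹ * t ^ n) • A ^ n)
        = ∑ g : G, (a n * c n g) • ρ g := by
      intro n
      rw [smul_smul, hcA n, Finset.smul_sum]
      exact Finset.sum_congr rfl fun g _ => by rw [smul_smul, ha, mul_assoc]
    rw [tsum_congr key, Summable.tsum_finsetSum fun g _ => (hw_summ g).smul_const (ρ g)]
    exact Finset.sum_congr rfl fun g _ => Summable.tsum_smul_const (hw_summ g) (ρ g)
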